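/- Let k ≥ 1 and m ≥ 1 be integers and let ω ∈ [0, 1 − 2^{−km}]. Define F(υ,k) := 2^{−k}·(√((2^k−1)·υ) + √(1−υ))². For every ω̃ : Fin m → ℝ with ω̃_j ∈ [0, 1 − 2^{−k}] for all j and Π_j (1 − ω̃_j) = 1 − ω, one has Π_j F(ω̃_j, k) ≤ F(1 − (1−ω)^{1/m}, k)^m, with equality when ω̃_j = 1 − (1−ω)^{1/m} for all j. That is, when the n = km parties split into m entangled groups of equal size k, the optimal distribution of the energy budget assigns each group the same energy 1 − (1−ω)^{1/m}. -/

import Mathlib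

open Finset

/-- `F(υ,k) = pEnt(υ,k) = 2^{−k}(√((2^k−1)υ) + √(1−υ))²`, the maximal success probability
for `k` parties sharing an entangled state with energy bound `υ`. -/
noncomputable def Fent (υ : ℝ) (k : ℕ) : ℝ :=
  (1 / (2 : ℝ) ^ k) * (Real.sqrt (((2 : ℝ) ^ k - 1) * υ) + Real.sqrt (1 - υ)) ^ 2

/-- The auxiliary function `s ↦ log F(1 - e^{-s}, k)`, written in a globally valid form. -/
noncomputable def gAux (k : ℕ) (s : ℝ) : ℝ :=
  Real.log (1 / (2 : ℝ) ^ k) +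
    2 * Real.log (Real.sqrt (((2 : ℝ) ^ k - 1) * (1 - Real.exp (-s))) + Real.sqrt (Real.exp (-s)))

/-- Its derivative. -/
noncomputable def dAux (k : ℕ) (s : ℝ) : ℝ :=
  (((2 : ℝ) ^ k - 1) * Real.exp (-s) / Real.sqrt (((2 : ℝ) ^ k - 1) * (1 - Real.exp (-s)))
      - Real.sqrt (Real.exp (-s))) /
    (Real.sqrt (((2 : ℝ) ^ k - 1) * (1 - Real.exp (-s))) + Real.sqrt (Real.exp (-s)))

lemma sqrtA_pos (k : ℕ) (s : ℝ) :
    0 < Real.sqrt (((2 : ℝ) ^ k - 1) * (1 - Real.exp (-s))) + Real.sqrt (Real.exp (-s)) :=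
  add_pos_of_nonneg_of_pos (Real.sqrt_nonneg _) (Real.sqrt_pos.mpr (Real.exp_pos _))

lemma gAux_eq (k : ℕ) (s : ℝ) : gAux k s = Real.log (Fent (1 - Real.exp (-s)) k) := by
  have hA := sqrtA_pos k s
  rw [Fent]
  rw [show (1 : ℝ) - (1 - Real.exp (-s)) = Real.exp (-s) by ring]
  rw [Real.log_mul (by positivity) (by positivity), Real.log_pow, gAux]
  push_cast
  ring

lemma hasDerivAt_gAux (k : ℕ) (hk : 1 ≤ k) {s : ℝ} (hs : 0 < s) :
    HasDerivAt (gAux k) (dAux k s) s := by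
  have hc1 : (1 : ℝ) < 2 ^ k := one_lt_pow₀ (by norm_num) (by omega)
  have hp : (0 : ℝ) < 2 ^ k - 1 := by linarith
  set t := Real.exp (-s) with ht
  have ht0 : 0 < t := Real.exp_pos _
  have ht1 : t < 1 := by
    rw [ht, ← Real.exp_zero]
    exact Real.exp_lt_exp.mpr (by linarith)
  have hinner : 0 < ((2 : ℝ) ^ k - 1) * (1 - t) := mul_pos hp (by linarith)
  set Y := Real.sqrt (((2 : ℝ) ^ k - 1) * (1 - t)) with hY
  set X := Real.sqrt t with hX
  have hY0 : 0 < Y := Real.sqrt_pos.mpr hinner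
  have hX0 : 0 < X := Real.sqrt_pos.mpr ht0
  have hA0 : 0 < Y + X := by linarith
  have hX2 : X ^ 2 = t := Real.sq_sqrt ht0.le
  have he : HasDerivAt (fun s : ℝ => Real.exp (-s)) (Real.exp (-s) * (-1)) s :=
    ((hasDerivAt_id s).neg).exp
  have h1 : HasDerivAt (fun s : ℝ => ((2 : ℝ) ^ k - 1) * (1 - Real.exp (-s)))
      (((2 : ℝ) ^ k - 1) * (-(Real.exp (-s) * (-1)))) s := (he.const_sub 1).const_mul _
  have h2 := (h1.sqrt hinner.ne').add (he.sqrt ht0.ne')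
  have h3 := ((h2.log hA0.ne').const_mul 2).const_add (Real.log (1 / (2 : ℝ) ^ k))
  convert h3 using 1
  · rfl
  · rfl
  · rfl
  simp only [Pi.add_apply]
  rw [dAux, ← ht, ← hY, ← hX]
  have hXt : t * -1 / (2 * X) = -(X / 2) := by
    rw [← hX2]; field_simp
  rw [hXt]
  field_simp
  ring

lemma key_alg (q x₁ x₂ y₁ y₂ : ℝ) (hq : 0 < q) (hx1 : 0 < x₁) (hx2 : 0 < x₂)
    (hy1 : 0 < y₁) (hy2 : 0 < y₂) (h21 : x₂ ≤ x₁) (h12 : y₁ ≤ y₂)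
    (hqx1 : y₁ ≤ q * x₁) (hqx2 : y₂ ≤ q * x₂) :
    (q ^ 2 * x₂ ^ 2 / (q * y₂) - x₂) / (q * y₂ + x₂) ≤
      (q ^ 2 * x₁ ^ 2 / (q * y₁) - x₁) / (q * y₁ + x₁) := by
  have e : ∀ x y : ℝ, 0 < x → 0 < y →
      (q ^ 2 * x ^ 2 / (q * y) - x) / (q * y + x) = x * (q * x - y) / (y * (q * y + x)) := by
    intro x y hx hy
    rw [div_eq_div_iff (by positivity) (by positivity)]
    field_simp
  rw [e _ _ hx1 hy1, e _ _ hx2 hy2]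
  rw [div_le_div_iff₀ (by positivity) (by positivity)]
  have h1 : 0 ≤ x₁ * y₂ - x₂ * y₁ := by nlinarith
  have h2 : 0 ≤ q * (x₁ * y₂ + x₂ * y₁) + x₁ * x₂ - y₁ * y₂ := by nlinarith
  nlinarith [mul_nonneg (mul_nonneg hq.le h1) h2]

lemma dAux_anti (k : ℕ) (hk : 1 ≤ k) :
    AntitoneOn (dAux k) (Set.Ioo 0 (Real.log ((2 : ℝ) ^ k))) := by
  have hc1 : (1 : ℝ) < 2 ^ k := one_lt_pow₀ (by norm_num) (by omega)
  have hc0 : (0 : ℝ) < 2 ^ k := by linarith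
  have hp : (0 : ℝ) < 2 ^ k - 1 := by linarith
  set q := Real.sqrt ((2 : ℝ) ^ k - 1) with hqdef
  have hq : 0 < q := Real.sqrt_pos.mpr hp
  have hq2 : q ^ 2 = (2 : ℝ) ^ k - 1 := Real.sq_sqrt hp.le
  have tfact : ∀ s : ℝ, s ∈ Set.Ioo 0 (Real.log ((2 : ℝ) ^ k)) →
      (2 : ℝ)⁻¹ ^ k ≤ Real.exp (-s) ∧ Real.exp (-s) < 1 := by
    intro s hs
    constructor
    · rw [← Real.exp_log (x := (2 : ℝ)⁻¹ ^ k) (by positivity)]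
      apply Real.exp_le_exp.mpr
      rw [inv_pow, Real.log_inv]
      linarith [hs.2]
    · rw [← Real.exp_zero]
      exact Real.exp_lt_exp.mpr (by linarith [hs.1])
  have key : ∀ s : ℝ, s ∈ Set.Ioo 0 (Real.log ((2 : ℝ) ^ k)) →
      dAux k s = (q ^ 2 * Real.sqrt (Real.exp (-s)) ^ 2 / (q * Real.sqrt (1 - Real.exp (-s)))
          - Real.sqrt (Real.exp (-s))) /
        (q * Real.sqrt (1 - Real.exp (-s)) + Real.sqrt (Real.exp (-s))) := by
    intro s hs
    rw [dAux, Real.sqrt_mul hp.le, ← hqdef]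
    rw [hq2, Real.sq_sqrt (Real.exp_pos (-s)).le]
  intro s₁ hs₁ s₂ hs₂ h12
  obtain ⟨ht1l, ht1u⟩ := tfact s₁ hs₁
  obtain ⟨ht2l, ht2u⟩ := tfact s₂ hs₂
  rw [key s₁ hs₁, key s₂ hs₂]
  have hmono : Real.exp (-s₂) ≤ Real.exp (-s₁) := Real.exp_le_exp.mpr (by linarith)
  apply key_alg q _ _ _ _ hq
    (Real.sqrt_pos.mpr (Real.exp_pos _)) (Real.sqrt_pos.mpr (Real.exp_pos _))
    (Real.sqrt_pos.mpr (by linarith)) (Real.sqrt_pos.mpr (by linarith))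
    (Real.sqrt_le_sqrt hmono) (Real.sqrt_le_sqrt (by linarith))
  · rw [← Real.sqrt_mul hp.le]
    apply Real.sqrt_le_sqrt
    have h1 : (1 : ℝ) ≤ 2 ^ k * Real.exp (-s₁) := by
      calc (1 : ℝ) = 2 ^ k * (2 : ℝ)⁻¹ ^ k := by rw [← mul_pow]; norm_num
        _ ≤ 2 ^ k * Real.exp (-s₁) := by gcongr
    nlinarith
  · rw [← Real.sqrt_mul hp.le]
    apply Real.sqrt_le_sqrt
    have h1 : (1 : ℝ) ≤ 2 ^ k * Real.exp (-s₂) := by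
      calc (1 : ℝ) = 2 ^ k * (2 : ℝ)⁻¹ ^ k := by rw [← mul_pow]; norm_num
        _ ≤ 2 ^ k * Real.exp (-s₂) := by gcongr
    nlinarith

lemma gAux_concave (k : ℕ) (hk : 1 ≤ k) :
    ConcaveOn ℝ (Set.Icc 0 (Real.log ((2 : ℝ) ^ k))) (gAux k) := by
  have hAcont : Continuous (fun s : ℝ =>
      Real.sqrt (((2 : ℝ) ^ k - 1) * (1 - Real.exp (-s))) + Real.sqrt (Real.exp (-s))) := by
    fun_prop
  apply AntitoneOn.concaveOn_of_deriv (convex_Icc _ _)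
  · unfold gAux
    apply ContinuousOn.add continuousOn_const
    apply ContinuousOn.mul continuousOn_const
    exact ContinuousOn.log hAcont.continuousOn fun s _ => (sqrtA_pos k s).ne'
  · rw [interior_Icc]
    intro s hs
    exact (hasDerivAt_gAux k hk hs.1).differentiableAt.differentiableWithinAt
  · rw [interior_Icc]
    intro a ha b hb hab
    rw [(hasDerivAt_gAux k hk ha.1).deriv, (hasDerivAt_gAux k hk hb.1).deriv]
    exact dAux_anti k hk ha hb hab

lemma fent_pos (k : ℕ) {υ : ℝ} (h : υ < 1) : 0 < Fent υ k := by
  have h2 : 0 < Real.sqrt (1 - υ) := Real.sqrt_pos.mpr (by linarith)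
  have h3 := Real.sqrt_nonneg (((2 : ℝ) ^ k - 1) * υ)
  rw [Fent]
  apply mul_pos (by positivity)
  apply pow_pos
  linarith

theorem equal_groups_equal_energy_optimal (k m : ℕ) (hk : 1 ≤ k) (hm : 1 ≤ m)
    (ω : ℝ) (hω : ω ∈ Set.Icc (0 : ℝ) (1 - 1 / (2 : ℝ) ^ (k * m))) :
    -- the equal energy split dominates any admissible split
    (∀ w : Fin m → ℝ, (∀ j, w j ∈ Set.Icc (0 : ℝ) (1 - 1 / (2 : ℝ) ^ k)) →
      ∏ j, (1 - w j) = 1 - ω →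
      ∏ j, Fent (w j) k ≤ Fent (1 - (1 - ω) ^ ((m : ℝ)⁻¹)) k ^ m) ∧
    -- the equal split satisfies energy conservation (equality case)
    (∏ j : Fin m, (1 - (1 - (1 - ω) ^ ((m : ℝ)⁻¹))) = 1 - ω) ∧
    (∏ j : Fin m, Fent (1 - (1 - ω) ^ ((m : ℝ)⁻¹)) k =
      Fent (1 - (1 - ω) ^ ((m : ℝ)⁻¹)) k ^ m) := by
  obtain ⟨hω0, hω1⟩ := hω
  have hc1 : (1 : ℝ) < 2 ^ k := one_lt_pow₀ (by norm_num) (by omega)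
  have hT0 : 0 < 1 - ω := by
    have : (0 : ℝ) < 1 / 2 ^ (k * m) := by positivity
    linarith
  have hm0 : (m : ℝ) ≠ 0 := by positivity
  refine ⟨?_, ?_, ?_⟩
  · intro w hw hprod
    have h1wpos : ∀ j, 0 < 1 - w j := by
      intro j
      have h2 := (hw j).2
      have : (0 : ℝ) < 1 / 2 ^ k := by positivity
      linarith
    have h1wle : ∀ j, 1 / (2 : ℝ) ^ k ≤ 1 - w j := by
      intro j; have := (hw j).2; linarith
    set L := Real.log ((2 : ℝ) ^ k) with hLdef
    set s : Fin m → ℝ := fun j => -Real.log (1 - w j) with hsdef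
    have hsmem : ∀ j, s j ∈ Set.Icc (0 : ℝ) L := by
      intro j
      constructor
      · have h0 := Real.log_nonpos (x := 1 - w j) (by linarith [h1wpos j])
          (by linarith [(hw j).1])
        show (0:ℝ) ≤ -Real.log (1 - w j)
        linarith
      · show -Real.log (1 - w j) ≤ L
        have h1 : Real.log (((2 : ℝ) ^ k)⁻¹) ≤ Real.log (1 - w j) := by
          apply Real.log_le_log (by positivity)
          rw [← one_div]; exact h1wle j
        rw [Real.log_inv] at h1
        linarith
    have hjen := (gAux_concave k hk).le_map_sum (t := Finset.univ)
      (w := fun _ : Fin m => (m : ℝ)⁻¹) (p := s) (fun i _ => by positivity)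
      (by simp only [Finset.sum_const, Finset.card_univ, Fintype.card_fin, nsmul_eq_mul]
          field_simp)
      (fun i _ => hsmem i)
    simp only [smul_eq_mul] at hjen
    have hsum : ∑ j, s j = -Real.log (1 - ω) := by
      simp only [hsdef]
      rw [Finset.sum_neg_distrib, ← Real.log_prod (fun j _ => (h1wpos j).ne'), hprod]
    have hbar : ∑ i, (m : ℝ)⁻¹ * s i = -Real.log (1 - ω) / m := by
      rw [← Finset.mul_sum, hsum]; ring
    rw [hbar] at hjen
    have hexp : Real.exp (-(-Real.log (1 - ω) / m)) = (1 - ω) ^ ((m : ℝ)⁻¹) := by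
      rw [Real.rpow_def_of_pos hT0]
      congr 1
      ring
    have hwbar1 : 1 - (1 - ω) ^ ((m : ℝ)⁻¹) < 1 := by
      have := Real.rpow_pos_of_pos hT0 ((m : ℝ)⁻¹)
      linarith
    have hgbar : gAux k (-Real.log (1 - ω) / m) =
        Real.log (Fent (1 - (1 - ω) ^ ((m : ℝ)⁻¹)) k) := by
      rw [gAux_eq, hexp]
    have hgj : ∀ j, gAux k (s j) = Real.log (Fent (w j) k) := by
      intro j
      rw [gAux_eq]
      simp only [hsdef, neg_neg, Real.exp_log (h1wpos j)]
      rw [show (1 : ℝ) - (1 - w j) = w j by ring]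
    have hwj1 : ∀ j, w j < 1 := by
      intro j
      have := h1wpos j; linarith
    calc ∏ j, Fent (w j) k = Real.exp (∑ j, Real.log (Fent (w j) k)) := by
          rw [Real.exp_sum]
          exact Finset.prod_congr rfl fun j _ =>
            (Real.exp_log (fent_pos k (hwj1 j))).symm
      _ ≤ Real.exp ((m : ℝ) * gAux k (-Real.log (1 - ω) / m)) := by
          apply Real.exp_le_exp.mpr
          have h1 : ∑ j, Real.log (Fent (w j) k) = ∑ j, gAux k (s j) :=
            Finset.sum_congr rfl fun j _ => (hgj j).symm
          have h2 : ∑ j, gAux k (s j) = (m : ℝ) * ∑ j, (m : ℝ)⁻¹ * gAux k (s j) := by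
            rw [← Finset.mul_sum, ← mul_assoc, mul_inv_cancel₀ hm0, one_mul]
          rw [h1, h2]
          have hmnn : (0 : ℝ) ≤ (m : ℝ) := by positivity
          exact mul_le_mul_of_nonneg_left hjen hmnn
      _ = Fent (1 - (1 - ω) ^ ((m : ℝ)⁻¹)) k ^ m := by
          rw [hgbar, Real.exp_nat_mul, Real.exp_log (fent_pos k hwbar1)]
  · simp only [sub_sub_cancel]
    rw [Finset.prod_const, Finset.card_univ, Fintype.card_fin]
    exact Real.rpow_inv_natCast_pow hT0.le (by omega)
  · rw [Finset.prod_const, Finset.card_univ, Fintype.card_fin]
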